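/- Let f : ℝ^d → ℝ be differentiable and L̃-smooth for some L̃ > 0, let θ₁ ∈ (0,1), θ₂ > 0, and set η = θ₂/((1 + θ₂)·θ₁). For any x, z, z⁺, g ∈ ℝ^d define y⁺ = x + θ₁·(z⁺ − z). Then (1/θ₁)·(f(y⁺) − f(x)) − (θ₂/(2L̃θ₁))·‖g − ∇f(x)‖² ≤ (L̃/(2η))·‖z⁺ − z‖² + ⟨g, z⁺ − z⟩. -/

import Mathlib

open scoped RealInnerProductSpace

/-- **The y-update (mirror-descent/momentum) inequality of the DHPL-Katyusha analysis**, in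
the case where the efficient Lipschitz constant `L̃` is the smoothness constant of `f`:
if `f : ℝ^d → ℝ` is differentiable and `L̃`-smooth, `θ₁ ∈ (0,1)`, `θ₂ > 0`,
`η = θ₂/((1 + θ₂)·θ₁)` and `y⁺ = x + θ₁·(z⁺ − z)`, then
`(1/θ₁)·(f(y⁺) − f(x)) − (θ₂/(2L̃θ₁))·‖g − ∇f(x)‖²
  ≤ (L̃/(2η))·‖z⁺ − z‖² + ⟨g, z⁺ − z⟩`. -/
theorem dhpl_katyusha_y_update_inequality
    {d : ℕ} {Ltil θ₁ θ₂ η : ℝ} (hL : 0 < Ltil)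
    (hθ₁ : θ₁ ∈ Set.Ioo (0 : ℝ) 1) (hθ₂ : 0 < θ₂)
    (hη : η = θ₂ / ((1 + θ₂) * θ₁))
    (f : EuclideanSpace ℝ (Fin d) → ℝ)
    (hdiff : Differentiable ℝ f)
    (hsmooth : ∀ u v : EuclideanSpace ℝ (Fin d),
      f v ≤ f u + ⟪gradient f u, v - u⟫ + Ltil / 2 * ‖v - u‖ ^ 2)
    (x z zplus g yplus : EuclideanSpace ℝ (Fin d))
    (hyplus : yplus = x + θ₁ • (zplus - z)) :
    (1 / θ₁) * (f yplus - f x) - θ₂ / (2 * Ltil * θ₁) * ‖g - gradient f x‖ ^ 2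
      ≤ Ltil / (2 * η) * ‖zplus - z‖ ^ 2 + ⟪g, zplus - z⟫ := by
  obtain ⟨hθ₁pos, hθ₁lt⟩ := hθ₁
  set w := zplus - z with hw
  have hyx : yplus - x = θ₁ • w := by rw [hyplus]; abel
  have h1 : f yplus ≤ f x + θ₁ * ⟪gradient f x, w⟫ + Ltil / 2 * (θ₁ ^ 2 * ‖w‖ ^ 2) := by
    have := hsmooth x yplus
    rw [hyx, real_inner_smul_right, norm_smul] at this
    simpa [mul_pow, abs_of_pos hθ₁pos] using this
  set ε := Ltil * θ₁ / θ₂ with hε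
  have hεpos : 0 < ε := by positivity
  have h2 : 2 * ε * (⟪gradient f x, w⟫ - ⟪g, w⟫) ≤ ε ^ 2 * ‖w‖ ^ 2 + ‖g - gradient f x‖ ^ 2 := by
    have hnn : (0:ℝ) ≤ ‖ε • w - (gradient f x - g)‖ ^ 2 := by positivity
    have hexp : ‖ε • w - (gradient f x - g)‖ ^ 2
        = ‖ε • w‖ ^ 2 - 2 * ⟪ε • w, gradient f x - g⟫ + ‖gradient f x - g‖ ^ 2 := by
      rw [@norm_sub_sq_real]
    have hrev : ‖gradient f x - g‖ = ‖g - gradient f x‖ := norm_sub_rev _ _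
    rw [hexp, norm_smul, Real.norm_eq_abs, mul_pow, sq_abs, real_inner_smul_left,
      inner_sub_right, real_inner_comm (gradient f x) w, real_inner_comm g w, hrev] at hnn
    linarith [hnn]
  have hηpos : 0 < η := by rw [hη]; positivity
  have hηval : Ltil / (2 * η) = Ltil * θ₁ * (1 + θ₂) / (2 * θ₂) := by
    rw [hη]; field_simp
  have h1' : (1 / θ₁) * (f yplus - f x) ≤ ⟪gradient f x, w⟫ + Ltil * θ₁ / 2 * ‖w‖ ^ 2 := by
    rw [div_mul_eq_mul_div, div_le_iff₀ hθ₁pos]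
    nlinarith [h1]
  have h2' : ⟪gradient f x, w⟫ - ⟪g, w⟫
      ≤ ε / 2 * ‖w‖ ^ 2 + θ₂ / (2 * Ltil * θ₁) * ‖g - gradient f x‖ ^ 2 := by
    have : θ₂ / (2 * Ltil * θ₁) = 1 / (2 * ε) := by rw [hε]; field_simp
    rw [this]
    calc ⟪gradient f x, w⟫ - ⟪g, w⟫
        = 2 * ε * (⟪gradient f x, w⟫ - ⟪g, w⟫) / (2 * ε) := by field_simp
      _ ≤ (ε ^ 2 * ‖w‖ ^ 2 + ‖g - gradient f x‖ ^ 2) / (2 * ε) := by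
          gcongr
      _ = ε / 2 * ‖w‖ ^ 2 + 1 / (2 * ε) * ‖g - gradient f x‖ ^ 2 := by
          field_simp
  rw [hηval]
  have hεval : ε / 2 + Ltil * θ₁ / 2 = Ltil * θ₁ * (1 + θ₂) / (2 * θ₂) := by
    rw [hε]; field_simp
  have hεN : (ε / 2 + Ltil * θ₁ / 2) * ‖w‖ ^ 2 = Ltil * θ₁ * (1 + θ₂) / (2 * θ₂) * ‖w‖ ^ 2 := by
    rw [hεval]
  linarith [h1', h2', hεN]
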